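/- arXiv:2502.14054 — 4 statements merged into one kernel-verified Lean document; each statement's English description precedes it below -/
import Mathlib

section
/- Let D ≥ 1 and L ≥ 1 be integers, and for 1 ≤ j ≤ D set β_j = D·L / C(D,j) where C(D,j) is the binomial coefficient. Let M be the D×D real matrix whose first row has every entry equal to 1/β_1, whose subdiagonal entries are M_{j+1,j} = β_j/β_{j+1} for 1 ≤ j ≤ D−1, and all other entries zero. Then (D·L + 1)·M^D = (I + M)^D, where I is the D×D identity matrix. -/
open Matrix Finset

/-- β_j = D·L / C(D,j). -/
noncomputable def betaPIR (D L j : ℕ) : ℝ := (D * L : ℝ) / (D.choose j : ℝ)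

/-- The D×D matrix M: first row all 1/β₁, subdiagonal entries β_j/β_{j+1}, zeros elsewhere. -/
noncomputable def Mpir (D L : ℕ) : Matrix (Fin D) (Fin D) ℝ :=
  Matrix.of fun i j =>
    if i.val = 0 then 1 / betaPIR D L 1
    else if i.val = j.val + 1 then betaPIR D L (j.val + 1) / betaPIR D L (j.val + 2)
    else 0

lemma betaPIR_ne (D L j : ℕ) (hD : 1 ≤ D) (hL : 1 ≤ L) (hj : j ≤ D) :
    betaPIR D L j ≠ 0 := by
  have h1 : (0:ℝ) < (D * L : ℕ) := by exact_mod_cast Nat.mul_pos hD hL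
  have h2 : (0:ℝ) < (D.choose j : ℝ) := by exact_mod_cast Nat.choose_pos hj
  push_cast at h1
  exact ne_of_gt (div_pos h1 h2)

lemma vecMul_smulMat {n : ℕ} (c : ℝ) (A : Matrix (Fin n) (Fin n) ℝ) (v : Fin n → ℝ) :
    v ᵥ* (c • A) = c • (v ᵥ* A) := by
  ext j
  simp [Matrix.vecMul, dotProduct, Finset.mul_sum, mul_left_comm]

lemma vecMul_sumMat {n : ℕ} {ι : Type*} (s : Finset ι) (A : ι → Matrix (Fin n) (Fin n) ℝ)
    (v : Fin n → ℝ) : v ᵥ* (∑ i ∈ s, A i) = ∑ i ∈ s, v ᵥ* A i := by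
  ext j
  simp only [Matrix.vecMul, dotProduct, Finset.sum_apply, Matrix.sum_apply,
    Finset.mul_sum]
  exact Finset.sum_comm

lemma Mpir_row0 (D L m : ℕ) (h2 : m < D) (h : m = 0) :
    Mpir D L ⟨m, h2⟩ = fun _ => 1 / betaPIR D L 1 := by
  funext j
  simp [Mpir, Fin.val_mk, h]

lemma Mpir_rowi (D L m : ℕ) (h1 : 1 ≤ m) (h2 : m < D) :
    Mpir D L ⟨m, h2⟩
      = (betaPIR D L m / betaPIR D L (m + 1)) • (Pi.single (⟨m - 1, by omega⟩ : Fin D) 1 : Fin D → ℝ) := by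
  funext j
  have hcond : (j = (⟨m - 1, by omega⟩ : Fin D)) ↔ (m = j.val + 1) := by
    rw [Fin.ext_iff]
    show j.val = m - 1 ↔ m = j.val + 1
    omega
  simp only [Mpir, of_apply, Fin.val_mk, Pi.smul_apply, Pi.single_apply, smul_eq_mul]
  rw [if_neg (by omega : ¬ m = 0)]
  by_cases hj : m = j.val + 1
  · rw [if_pos hj, if_pos (hcond.mpr hj), mul_one, hj]
  · rw [if_neg hj, if_neg (fun hh => hj (hcond.mp hh)), mul_zero]

lemma Mpir_orbit (D L : ℕ) (hD : 1 ≤ D) (hL : 1 ≤ L) :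
    ∀ k, k ≤ D - 1 →
      Pi.single (⟨D - 1, by omega⟩ : Fin D) (1:ℝ) ᵥ* (Mpir D L) ^ k
        = (betaPIR D L (D - k) / betaPIR D L D) •
            (Pi.single (⟨D - 1 - k, by omega⟩ : Fin D) 1 : Fin D → ℝ) := by
  intro k
  induction k with
  | zero =>
    intro _
    rw [pow_zero, Matrix.vecMul_one]
    have hc : betaPIR D L (D - 0) / betaPIR D L D = 1 := by
      rw [Nat.sub_zero]
      exact div_self (betaPIR_ne D L D hD hL le_rfl)
    rw [hc, one_smul]
    rfl
  | succ k ih =>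
    intro hk
    have hk' : k ≤ D - 1 := by omega
    rw [pow_succ, ← Matrix.vecMul_vecMul, ih hk', Matrix.smul_vecMul,
      Matrix.single_one_vecMul, Matrix.row, Mpir_rowi D L (D - 1 - k) (by omega) (by omega), smul_smul]
    have e1 : D - 1 - k + 1 = D - k := by omega
    have e2 : D - 1 - k = D - (k + 1) := by omega
    have hidx : (⟨D - 1 - k - 1, by omega⟩ : Fin D) = ⟨D - 1 - (k + 1), by omega⟩ := by
      apply Fin.ext
      show D - 1 - k - 1 = D - 1 - (k + 1)
      omega
    rw [e1, hidx]
    congr 1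
    have hne1 : betaPIR D L (D - k) ≠ 0 := betaPIR_ne D L _ hD hL (by omega)
    have hne2 : betaPIR D L D ≠ 0 := betaPIR_ne D L D hD hL le_rfl
    rw [e2]
    field_simp

lemma Mpir_orbit_top (D L : ℕ) (hD : 1 ≤ D) (hL : 1 ≤ L) :
    Pi.single (⟨D - 1, by omega⟩ : Fin D) (1:ℝ) ᵥ* (Mpir D L) ^ D
      = (1 / betaPIR D L D) • (fun _ => 1 : Fin D → ℝ) := by
  have hpow : (Mpir D L) ^ ((D - 1) + 1) = (Mpir D L) ^ (D - 1) * Mpir D L := pow_succ _ _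
  rw [Nat.sub_add_cancel hD] at hpow
  have hidx : (⟨D - 1 - (D - 1), by omega⟩ : Fin D) = ⟨0, by omega⟩ := by
    apply Fin.ext
    show D - 1 - (D - 1) = 0
    omega
  rw [hpow, ← Matrix.vecMul_vecMul, Mpir_orbit D L hD hL (D - 1) le_rfl,
    Matrix.smul_vecMul, hidx, Matrix.single_one_vecMul, Matrix.row, Mpir_row0 D L 0 (by omega) rfl]
  have h1 : D - (D - 1) = 1 := by omega
  rw [h1]
  funext x
  simp only [Pi.smul_apply, smul_eq_mul]
  have hne1 : betaPIR D L 1 ≠ 0 := betaPIR_ne D L 1 hD hL hD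
  have hne2 : betaPIR D L D ≠ 0 := betaPIR_ne D L D hD hL le_rfl
  field_simp

/-- The Cayley–Hamilton combination that will be shown to vanish. -/
noncomputable def PmatPIR (D L : ℕ) : Matrix (Fin D) (Fin D) ℝ :=
  (Mpir D L) ^ D - ∑ i : Fin D, (1 / betaPIR D L (i.val + 1)) • (Mpir D L) ^ (D - 1 - i.val)

lemma PmatPIR_comm (D L k : ℕ) :
    (Mpir D L) ^ k * PmatPIR D L = PmatPIR D L * (Mpir D L) ^ k := by
  have h1 : Commute (Mpir D L) (PmatPIR D L) := by
    unfold PmatPIR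
    refine Commute.sub_right ((Commute.refl _).pow_right D) ?_
    refine Commute.sum_right _ _ _ (fun i _ => ?_)
    exact Commute.smul_right ((Commute.refl _).pow_right _) _
  exact (h1.pow_left k).eq

lemma PmatPIR_top (D L : ℕ) (hD : 1 ≤ D) (hL : 1 ≤ L) :
    Pi.single (⟨D - 1, by omega⟩ : Fin D) (1:ℝ) ᵥ* PmatPIR D L = 0 := by
  unfold PmatPIR
  rw [Matrix.vecMul_sub, Mpir_orbit_top D L hD hL, vecMul_sumMat]
  have hterm : ∀ i : Fin D,
      Pi.single (⟨D - 1, by omega⟩ : Fin D) (1:ℝ) ᵥ*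
          ((1 / betaPIR D L (i.val + 1)) • (Mpir D L) ^ (D - 1 - i.val))
        = (1 / betaPIR D L D) • (Pi.single i 1 : Fin D → ℝ) := by
    intro i
    have hiD : i.val < D := i.isLt
    rw [vecMul_smulMat, Mpir_orbit D L hD hL (D - 1 - i.val) (by omega), smul_smul]
    have h2 : D - (D - 1 - i.val) = i.val + 1 := by omega
    have hidx : (⟨D - 1 - (D - 1 - i.val), by omega⟩ : Fin D) = i := by
      apply Fin.ext
      show D - 1 - (D - 1 - i.val) = i.val
      omega
    rw [h2, hidx]
    congr 1
    have hne1 : betaPIR D L (i.val + 1) ≠ 0 := betaPIR_ne D L _ hD hL (by omega)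
    field_simp
  rw [Finset.sum_congr rfl (fun i _ => hterm i), ← Finset.smul_sum]
  have hsum : (∑ i : Fin D, Pi.single i (1:ℝ)) = (fun _ => 1 : Fin D → ℝ) :=
    Finset.univ_sum_single (fun _ => (1:ℝ))
  rw [hsum, sub_self]

lemma PmatPIR_zero (D L : ℕ) (hD : 1 ≤ D) (hL : 1 ≤ L) : PmatPIR D L = 0 := by
  have hall : ∀ j : Fin D, PmatPIR D L j = 0 := by
    intro j
    have hjD : j.val < D := j.isLt
    have horb := Mpir_orbit D L hD hL (D - 1 - j.val) (by omega)
    have hjj : (⟨D - 1 - (D - 1 - j.val), by omega⟩ : Fin D) = j := by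
      apply Fin.ext
      show D - 1 - (D - 1 - j.val) = j.val
      omega
    have h2 : D - (D - 1 - j.val) = j.val + 1 := by omega
    rw [hjj, h2] at horb
    have hne1 : betaPIR D L (j.val + 1) ≠ 0 := betaPIR_ne D L _ hD hL (by omega)
    have hne2 : betaPIR D L D ≠ 0 := betaPIR_ne D L D hD hL le_rfl
    have hone : betaPIR D L D / betaPIR D L (j.val + 1) *
        (betaPIR D L (j.val + 1) / betaPIR D L D) = 1 := by
      field_simp
    have hsingle : (Pi.single j (1:ℝ) : Fin D → ℝ)
        = (betaPIR D L D / betaPIR D L (j.val + 1)) •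
          (Pi.single (⟨D - 1, by omega⟩ : Fin D) (1:ℝ) ᵥ* (Mpir D L) ^ (D - 1 - j.val)) := by
      rw [horb, smul_smul, hone, one_smul]
    have hkey : Pi.single j (1:ℝ) ᵥ* PmatPIR D L = 0 := by
      rw [hsingle, Matrix.smul_vecMul, Matrix.vecMul_vecMul, PmatPIR_comm,
        ← Matrix.vecMul_vecMul, PmatPIR_top D L hD hL, Matrix.zero_vecMul, smul_zero]
    rwa [Matrix.single_one_vecMul] at hkey
  ext i j
  exact congrFun (hall i) j

lemma Mpir_key (D L : ℕ) (hD : 1 ≤ D) (hL : 1 ≤ L) :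
    (Mpir D L) ^ D
      = ∑ i : Fin D, (1 / betaPIR D L (i.val + 1)) • (Mpir D L) ^ (D - 1 - i.val) := by
  have h := PmatPIR_zero D L hD hL
  have h' : (Mpir D L) ^ D
      - ∑ i : Fin D, (1 / betaPIR D L (i.val + 1)) • (Mpir D L) ^ (D - 1 - i.val) = 0 := h
  exact sub_eq_zero.mp h'

theorem cayley_hamilton_identity (D L : ℕ) (hD : 1 ≤ D) (hL : 1 ≤ L) :
    ((D * L + 1 : ℝ)) • (Mpir D L) ^ D = (1 + Mpir D L) ^ D := by
  have hDL : ((D : ℝ) * L) ≠ 0 := by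
    have h1 : (0:ℝ) < (D * L : ℕ) := by exact_mod_cast Nat.mul_pos hD hL
    push_cast at h1
    exact ne_of_gt h1
  have key := Mpir_key D L hD hL
  have hchoose : ∀ i : Fin D, ((D : ℝ) * L) * (1 / betaPIR D L (i.val + 1))
      = (D.choose (i.val + 1) : ℝ) := by
    intro i
    rw [betaPIR, one_div_div, mul_comm, div_mul_cancel₀ _ hDL]
  have lhs_eq : ((D * L + 1 : ℝ)) • (Mpir D L) ^ D
      = (Mpir D L) ^ D
        + ∑ i : Fin D, (D.choose (i.val + 1) : ℝ) • (Mpir D L) ^ (D - 1 - i.val) := by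
    rw [add_smul, one_smul, add_comm]
    congr 1
    rw [key, Finset.smul_sum]
    exact Finset.sum_congr rfl (fun i _ => by rw [smul_smul, hchoose i])
  rw [lhs_eq]
  have rhs_eq : (1 + Mpir D L) ^ D
      = ∑ m ∈ Finset.range (D + 1),
          (Mpir D L) ^ (D - m) * ((D.choose m : ℕ) : Matrix (Fin D) (Fin D) ℝ) := by
    rw [(Commute.one_left (Mpir D L)).add_pow]
    exact Finset.sum_congr rfl (fun m _ => by rw [one_pow, one_mul])
  rw [rhs_eq, Finset.sum_range_succ']
  have h0term : (Mpir D L) ^ (D - 0) * ((D.choose 0 : ℕ) : Matrix (Fin D) (Fin D) ℝ)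
      = (Mpir D L) ^ D := by
    simp
  rw [h0term, add_comm]
  congr 1
  rw [← Fin.sum_univ_eq_sum_range
    (fun i => (Mpir D L) ^ (D - (i + 1)) * ((D.choose (i + 1) : ℕ) : Matrix (Fin D) (Fin D) ℝ)) D]
  refine Finset.sum_congr rfl (fun i _ => ?_)
  have hsub : D - 1 - i.val = D - (i.val + 1) := by omega
  rw [hsub, Nat.cast_smul_eq_nsmul, nsmul_eq_mul, (Nat.cast_commute (D.choose (i.val + 1)) _).eq]
end

section
/- Let D, L ≥ 1 and suppose D divides K with K ≥ D. With M the D×D matrix defined from β_j = D·L/C(D,j) as above (first row all 1/β_1, subdiagonal β_j/β_{j+1}, zeros elsewhere), and N = D·L + 1, it holds that (I + M)^{K−D} = N^{K/D − 1} · M^{K−D}. -/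
open Matrix Finset

/-- c_j = C(D,j+1)/(DL). -/
noncomputable def cP (D L j : ℕ) : ℝ := (D.choose (j+1) : ℝ) / (D * L : ℝ)

/-- g_j = C(D,j+1)/D. -/
noncomputable def gP (D j : ℕ) : ℝ := (D.choose (j+1) : ℝ) / (D : ℝ)

/-- standard basis vector (zero if j ≥ D). -/
def evP (D j : ℕ) : Fin D → ℝ := fun i => if (i : ℕ) = j then 1 else 0

/-- Q_0 = 1, Q_{j+1} = Q_j M - c_j. -/
noncomputable def QP (D L : ℕ) : ℕ → Matrix (Fin D) (Fin D) ℝ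
  | 0 => 1
  | (j+1) => QP D L j * Mpir D L - cP D L j • 1

lemma evP_top (D : ℕ) : evP D D = 0 := by
  funext i; simp [evP, (Fin.is_lt i).ne]

lemma mulVec_evP (D : ℕ) (A : Matrix (Fin D) (Fin D) ℝ) (j : Fin D) :
    A *ᵥ evP D j.val = fun i => A i j := by
  funext i
  simp only [mulVec, dotProduct, evP]
  rw [Finset.sum_eq_single j]
  · simp
  · intro k _ hk
    rw [if_neg (fun h => hk (Fin.ext h)), mul_zero]
  · intro h; exact absurd (Finset.mem_univ j) h

lemma commute_M_QP (D L : ℕ) (j : ℕ) : Commute (Mpir D L) (QP D L j) := by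
  induction j with
  | zero => exact Commute.one_right _
  | succ j ih =>
    exact (ih.mul_right (Commute.refl _)).sub_right
      ((Commute.one_right _).smul_right _)

lemma commute_QP_QP (D L : ℕ) (i j : ℕ) : Commute (QP D L i) (QP D L j) := by
  induction i with
  | zero => exact Commute.one_left _
  | succ i ih =>
    exact (Commute.mul_left ih (commute_M_QP D L j)).sub_left
      ((Commute.one_left _).smul_left _)

lemma Mpir_col (D L : ℕ) (j : ℕ) (hj : j < D) :
    (fun i => Mpir D L i ⟨j, hj⟩)
      = (1 / betaPIR D L 1) • evP D 0
        + (betaPIR D L (j+1) / betaPIR D L (j+2)) • evP D (j+1) := by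
  funext i
  simp only [Mpir, of_apply, evP, Pi.add_apply, Pi.smul_apply, smul_eq_mul]
  by_cases h0 : (i : ℕ) = 0
  · simp [h0]
  · by_cases h1 : (i : ℕ) = j + 1 <;> simp [h0, h1]

lemma QP_mulVec (D L : ℕ) (hD : 1 ≤ D) (hL : 1 ≤ L) :
    ∀ j, j ≤ D → QP D L j *ᵥ evP D 0 = gP D j • evP D j := by
  have hD' : (D : ℝ) ≠ 0 := Nat.cast_ne_zero.mpr (by omega)
  have hL' : (L : ℝ) ≠ 0 := Nat.cast_ne_zero.mpr (by omega)
  intro j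
  induction j with
  | zero =>
    intro _
    have : gP D 0 = 1 := by
      simp [gP, Nat.choose_one_right, div_self hD']
    rw [QP, this, one_smul, Matrix.one_mulVec]
  | succ j ih =>
    intro hj1
    have hjD : j < D := by omega
    have hstep := ih (by omega)
    rw [QP, Matrix.sub_mulVec, ← (commute_M_QP D L j).eq, ← Matrix.mulVec_mulVec,
      hstep, Matrix.mulVec_smul, Matrix.smul_mulVec, Matrix.one_mulVec]
    have hcol := mulVec_evP D (Mpir D L) ⟨j, hjD⟩
    rw [show ((⟨j, hjD⟩ : Fin D) : ℕ) = j from rfl] at hcol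
    rw [hcol, Mpir_col D L j hjD]
    have hc : gP D j * (1 / betaPIR D L 1) = cP D L j := by
      unfold gP betaPIR cP
      rw [Nat.choose_one_right]
      field_simp
    by_cases htop : j + 1 = D
    · rw [htop, evP_top]
      funext i
      simp only [Pi.add_apply, Pi.smul_apply, Pi.sub_apply, Pi.zero_apply,
        smul_eq_mul, evP, smul_zero, mul_zero]
      rw [← hc]
      ring
    · have hg : gP D j * (betaPIR D L (j+1) / betaPIR D L (j+2)) = gP D (j+1) := by
        unfold gP betaPIR
        have h1 : (D.choose (j+1) : ℝ) ≠ 0 :=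
          Nat.cast_ne_zero.mpr (Nat.choose_pos (by omega)).ne'
        have h2 : (D.choose (j+2) : ℝ) ≠ 0 :=
          Nat.cast_ne_zero.mpr (Nat.choose_pos (by omega)).ne'
        field_simp
      funext i
      simp only [Pi.add_apply, Pi.smul_apply, Pi.sub_apply, smul_eq_mul, evP]
      rw [← hc, ← hg]
      ring

lemma QP_top_eq_zero (D L : ℕ) (hD : 1 ≤ D) (hL : 1 ≤ L) :
    QP D L D = 0 := by
  have h0 : QP D L D *ᵥ evP D 0 = 0 := by
    rw [QP_mulVec D L hD hL D le_rfl, evP_top, smul_zero]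
  have hcols : ∀ j : Fin D, QP D L D *ᵥ evP D j.val = 0 := by
    intro j
    have hg : gP D j.val ≠ 0 := by
      have := Nat.choose_pos (show (j:ℕ)+1 ≤ D from j.is_lt)
      have hD' : (D : ℝ) ≠ 0 := Nat.cast_ne_zero.mpr (by omega)
      exact div_ne_zero (Nat.cast_ne_zero.mpr this.ne') hD'
    have hQj := QP_mulVec D L hD hL j.val (le_of_lt j.is_lt)
    have hev : evP D j.val = (gP D j.val)⁻¹ • (QP D L j.val *ᵥ evP D 0) := by
      rw [hQj, smul_smul, inv_mul_cancel₀ hg, one_smul]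
    rw [hev, Matrix.mulVec_smul, Matrix.mulVec_mulVec,
      (commute_QP_QP D L D j.val).eq, ← Matrix.mulVec_mulVec, h0,
      Matrix.mulVec_zero, smul_zero]
  ext i j
  have := congrFun (hcols j) i
  rw [mulVec_evP D (QP D L D) j] at this
  simpa using this

lemma QP_expand (D L : ℕ) :
    ∀ j, QP D L j = Mpir D L ^ j - ∑ t ∈ Finset.range j, cP D L t • Mpir D L ^ (j - 1 - t) := by
  intro j
  induction j with
  | zero => simp [QP]
  | succ j ih =>
    rw [QP, ih, sub_mul, Finset.sum_mul, pow_succ]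
    have hterm : ∀ t ∈ Finset.range j,
        (cP D L t • Mpir D L ^ (j - 1 - t)) * Mpir D L = cP D L t • Mpir D L ^ (j - t) := by
      intro t ht
      rw [Finset.mem_range] at ht
      rw [smul_mul_assoc, ← pow_succ, show j - 1 - t + 1 = j - t by omega]
    rw [Finset.sum_congr rfl hterm]
    have hsum : ∑ t ∈ Finset.range (j+1), cP D L t • Mpir D L ^ (j + 1 - 1 - t)
        = (∑ t ∈ Finset.range j, cP D L t • Mpir D L ^ (j - t)) + cP D L j • 1 := by
      rw [Finset.sum_range_succ]
      simp
    rw [hsum]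
    abel

lemma natCast_matrix (D : ℕ) (n : ℕ) :
    ((n : ℕ) : Matrix (Fin D) (Fin D) ℝ) = (n : ℝ) • (1 : Matrix (Fin D) (Fin D) ℝ) := by
  rw [Nat.cast_smul_eq_nsmul, nsmul_eq_mul, mul_one]

lemma key_identity (D L : ℕ) (hD : 1 ≤ D) (hL : 1 ≤ L) :
    (1 + Mpir D L) ^ D = ((D * L + 1 : ℝ)) • Mpir D L ^ D := by
  have hD' : (D : ℝ) ≠ 0 := Nat.cast_ne_zero.mpr (by omega)
  have hL' : (L : ℝ) ≠ 0 := Nat.cast_ne_zero.mpr (by omega)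
  have hDL : ((D : ℝ) * L) ≠ 0 := mul_ne_zero hD' hL'
  have hQ := QP_top_eq_zero D L hD hL
  rw [QP_expand D L D] at hQ
  have hMD : Mpir D L ^ D = ∑ t ∈ Finset.range D, cP D L t • Mpir D L ^ (D - 1 - t) :=
    sub_eq_zero.mp hQ
  have hMD2 : ((D : ℝ) * L) • Mpir D L ^ D
      = ∑ t ∈ Finset.range D, ((D.choose (t+1) : ℝ)) • Mpir D L ^ (D - 1 - t) := by
    rw [hMD, Finset.smul_sum]
    apply Finset.sum_congr rfl
    intro t _
    rw [smul_smul]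
    congr 1
    unfold cP
    field_simp
  have hreflect : ∑ t ∈ Finset.range D, ((D.choose (t+1) : ℝ)) • Mpir D L ^ (D - 1 - t)
      = ∑ k ∈ Finset.range D, ((D.choose k : ℝ)) • Mpir D L ^ k := by
    rw [← Finset.sum_range_reflect]
    apply Finset.sum_congr rfl
    intro k hk
    rw [Finset.mem_range] at hk
    have h1 : D - 1 - k + 1 = D - k := by omega
    have h2 : D - 1 - (D - 1 - k) = k := by omega
    rw [h1, h2, Nat.choose_symm (le_of_lt hk)]
  have hbinom : (1 + Mpir D L) ^ D
      = ∑ k ∈ Finset.range (D+1), ((D.choose k : ℝ)) • Mpir D L ^ k := by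
    rw [add_comm, (Commute.one_right (Mpir D L)).add_pow]
    apply Finset.sum_congr rfl
    intro k _
    rw [one_pow, mul_one, natCast_matrix, mul_smul_comm, mul_one]
  rw [hbinom, Finset.sum_range_succ, ← hreflect, ← hMD2, Nat.choose_self]
  rw [Nat.cast_one, one_smul, add_smul, one_smul]

theorem power_identity (D L K : ℕ) (hD : 1 ≤ D) (hL : 1 ≤ L) (hDK : D ∣ K) (hK : D ≤ K) :
    (1 + Mpir D L) ^ (K - D) = ((D * L + 1 : ℝ)) ^ (K / D - 1) • (Mpir D L) ^ (K - D) := by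
  obtain ⟨m, rfl⟩ := hDK
  have hm : 1 ≤ m := by
    by_contra h
    push_neg at h
    have : m = 0 := by omega
    subst this
    simp at hK
    omega
  obtain ⟨m', rfl⟩ : ∃ m', m = m' + 1 := ⟨m - 1, by omega⟩
  have h1 : D * (m' + 1) - D = D * m' := by rw [Nat.mul_succ]; omega
  have h2 : D * (m' + 1) / D = m' + 1 := Nat.mul_div_cancel_left _ (by omega)
  rw [h1, h2, Nat.add_sub_cancel, pow_mul, key_identity D L hD hL, smul_pow, ← pow_mul]
end

section
/- Let D, L ≥ 1, N = D·L + 1, and suppose D divides K with K ≥ D. Define the row vectors f^T = 1^T M^{K−D} and g^T = 1^T (I + M)^{K−D}, where 1 is the all-ones column vector of length D and M is the D×D matrix built from β_j = D·L/C(D,j). Then g_j = N^{K/D − 1} · f_j for every j ∈ {1,…,D}; in particular f_j/g_j = N^{1 − K/D} whenever g_j ≠ 0. -/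
open Matrix Finset

lemma betaPIR_pos (D L j : ℕ) (hD : 1 ≤ D) (hL : 1 ≤ L) (hj : j ≤ D) :
    0 < betaPIR D L j := by
  unfold betaPIR
  have h1 : 0 < (D * L : ℕ) := Nat.mul_pos hD hL
  have h2 : 0 < D.choose j := Nat.choose_pos hj
  positivity

/-- F1: for m ≤ t, row t of M^m is a scaled standard basis row. -/
lemma Mpir_pow_row (D L : ℕ) (hD : 1 ≤ D) (hL : 1 ≤ L) (m : ℕ) (t j : Fin D)
    (h : m ≤ t.val) :
    (Mpir D L ^ m) t j =
      betaPIR D L (t.val + 1 - m) / betaPIR D L (t.val + 1) *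
        (if j.val + m = t.val then 1 else 0) := by
  induction m generalizing j with
  | zero =>
    simp only [pow_zero, Matrix.one_apply, Nat.sub_zero, Nat.add_zero]
    rw [div_self (betaPIR_ne D L (t.val+1) hD hL (by omega)), one_mul]
    by_cases hc : t = j
    · rw [if_pos hc, if_pos (by rw [hc])]
    · rw [if_neg hc, if_neg (fun hh => hc (Fin.ext hh.symm))]
  | succ m ih =>
    have hm : m ≤ t.val := by omega
    rw [pow_succ, Matrix.mul_apply]
    have l0 : t.val - m < D := by omega
    have key : ∀ l : Fin D, (Mpir D L ^ m) t l * Mpir D L l j =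
        if l = ⟨t.val - m, l0⟩ then
          (betaPIR D L (t.val + 1 - m) / betaPIR D L (t.val + 1)) * Mpir D L ⟨t.val - m, l0⟩ j
        else 0 := by
      intro l
      rw [ih l hm]
      by_cases hl : l = ⟨t.val - m, l0⟩
      · subst hl
        rw [if_pos rfl]
        have hcv : ((⟨t.val - m, l0⟩ : Fin D)).val + m = t.val := by simp; omega
        rw [if_pos hcv, mul_one]
      · have : ¬ (l.val + m = t.val) := by
          intro hc; apply hl; apply Fin.ext; simp; omega
        rw [if_neg this, if_neg hl, mul_zero, zero_mul]
    rw [Finset.sum_congr rfl (fun l _ => key l), Finset.sum_ite_eq' _ _ _]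
    simp only [Finset.mem_univ, if_pos]
    have hne : ((⟨t.val - m, l0⟩ : Fin D)).val ≠ 0 := by simp; omega
    show _ * Mpir D L _ j = _
    rw [Mpir]
    simp only [Matrix.of_apply]
    rw [if_neg hne]
    by_cases hc : (⟨t.val - m, l0⟩ : Fin D).val = j.val + 1
    · rw [if_pos hc]
      simp only at hc
      have hj1 : j.val + 1 = t.val - m := hc.symm
      have hcond : j.val + (m+1) = t.val := by omega
      rw [if_pos hcond, mul_one]
      have e1 : j.val + 1 = t.val + 1 - (m+1) := by omega
      have e2 : j.val + 2 = t.val + 1 - m := by omega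
      rw [e1, e2, div_mul_div_comm,
        mul_comm (betaPIR D L (t.val+1)) (betaPIR D L (t.val+1-m)),
        mul_div_mul_left _ _ (betaPIR_ne D L (t.val+1-m) hD hL (by omega))]
    · rw [if_neg hc]
      simp only at hc
      have : ¬ (j.val + (m+1) = t.val) := by omega
      rw [if_neg this, mul_zero, mul_zero]

/-- row D-1 of M^D is constant 1/β_D. -/
lemma Mpir_pow_D_last (D L : ℕ) (hD : 1 ≤ D) (hL : 1 ≤ L) (j : Fin D) :
    (Mpir D L ^ D) ⟨D - 1, by omega⟩ j = 1 / betaPIR D L D := by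
  have hsplit : Mpir D L ^ D = Mpir D L ^ (D - 1) * Mpir D L := by
    rw [← pow_succ]; congr 1; omega
  rw [hsplit, Matrix.mul_apply]
  have h0 : (0 : ℕ) < D := hD
  have key : ∀ l : Fin D, (Mpir D L ^ (D-1)) ⟨D-1, by omega⟩ l * Mpir D L l j =
      if l = ⟨0, h0⟩ then betaPIR D L 1 / betaPIR D L D * Mpir D L ⟨0, h0⟩ j else 0 := by
    intro l
    rw [Mpir_pow_row D L hD hL (D-1) ⟨D-1, by omega⟩ l (by simp)]
    have e1 : (⟨D-1, by omega⟩ : Fin D).val + 1 - (D-1) = 1 := by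
      simp only [Fin.val_mk]; omega
    have e2 : (⟨D-1, by omega⟩ : Fin D).val + 1 = D := by
      simp only [Fin.val_mk]; omega
    rw [e1, e2]
    by_cases hl : l = ⟨0, h0⟩
    · subst hl
      rw [if_pos rfl]
      have hcv : ((⟨0, h0⟩ : Fin D)).val + (D-1) = ((⟨D-1, by omega⟩ : Fin D)).val := by
        simp only [Fin.val_mk]; omega
      rw [if_pos hcv, mul_one]
    · have hnc : ¬ (l.val + (D-1) = ((⟨D-1, by omega⟩ : Fin D)).val) := by
        intro hc
        have hc' : l.val + (D-1) = D - 1 := hc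
        exact hl (Fin.ext (by simp only [Fin.val_mk]; omega))
      rw [if_neg hnc, mul_zero, zero_mul, if_neg hl]
  rw [Finset.sum_congr rfl (fun l _ => key l), Finset.sum_ite_eq' _ _ _]
  simp only [Finset.mem_univ, if_pos]
  have : Mpir D L ⟨0, h0⟩ j = 1 / betaPIR D L 1 := by
    rw [Mpir]; simp
  rw [this, div_mul_div_comm, mul_one, mul_comm (betaPIR D L D) (betaPIR D L 1),
    div_mul_cancel_left₀ (betaPIR_ne D L 1 hD hL (by omega)), one_div]

/-- Row-picking: multiplying by M^(D-1-t) on the left relates row D-1 to row t. -/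
lemma Mpir_rowpick (D L : ℕ) (hD : 1 ≤ D) (hL : 1 ≤ L)
    (A : Matrix (Fin D) (Fin D) ℝ) (t j : Fin D) :
    (Mpir D L ^ (D - 1 - t.val) * A) ⟨D - 1, by omega⟩ j =
      betaPIR D L (t.val + 1) / betaPIR D L D * A t j := by
  rw [Matrix.mul_apply]
  have key : ∀ l : Fin D, (Mpir D L ^ (D - 1 - t.val)) ⟨D-1, by omega⟩ l * A l j =
      if l = t then betaPIR D L (t.val + 1) / betaPIR D L D * A t j else 0 := by
    intro l
    rw [Mpir_pow_row D L hD hL (D - 1 - t.val) ⟨D-1, by omega⟩ l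
      (by simp only [Fin.val_mk]; omega)]
    have e1 : (⟨D-1, by omega⟩ : Fin D).val + 1 - (D - 1 - t.val) = t.val + 1 := by
      simp only [Fin.val_mk]; omega
    have e2 : (⟨D-1, by omega⟩ : Fin D).val + 1 = D := by
      simp only [Fin.val_mk]; omega
    rw [e1, e2]
    by_cases hl : l = t
    · subst hl
      rw [if_pos rfl]
      have hcv : l.val + (D - 1 - l.val) = ((⟨D-1, by omega⟩ : Fin D)).val := by
        simp only [Fin.val_mk]; omega
      rw [if_pos hcv, mul_one]
    · have hnc : ¬ (l.val + (D - 1 - t.val) = ((⟨D-1, by omega⟩ : Fin D)).val) := by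
        intro hc
        have hc' : l.val + (D - 1 - t.val) = D - 1 := hc
        exact hl (Fin.ext (by omega))
      rw [if_neg hnc, mul_zero, zero_mul, if_neg hl]
  rw [Finset.sum_congr rfl (fun l _ => key l), Finset.sum_ite_eq' _ _ _]
  simp only [Finset.mem_univ, if_pos]

/-- The last row of the binomial sum equals N times the last row of M^D. -/
lemma Mpir_lastrow_sum (D L : ℕ) (hD : 1 ≤ D) (hL : 1 ≤ L) (j : Fin D) :
    ∑ k ∈ Finset.range (D + 1), (D.choose k : ℝ) * (Mpir D L ^ k) ⟨D-1, by omega⟩ j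
      = ((D * L : ℝ) + 1) * (Mpir D L ^ D) ⟨D-1, by omega⟩ j := by
  rw [Finset.sum_range_succ, Mpir_pow_D_last D L hD hL j, Nat.choose_self]
  have hsum : ∑ k ∈ Finset.range D, (D.choose k : ℝ) * (Mpir D L ^ k) ⟨D-1, by omega⟩ j
      = (D * L : ℝ) / betaPIR D L D := by
    have key : ∀ k ∈ Finset.range D,
        (D.choose k : ℝ) * (Mpir D L ^ k) ⟨D-1, by omega⟩ j =
        if k = D - 1 - j.val then (D * L : ℝ) / betaPIR D L D else 0 := by
      intro k hk
      rw [Finset.mem_range] at hk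
      rw [Mpir_pow_row D L hD hL k ⟨D-1, by omega⟩ j (by simp only [Fin.val_mk]; omega)]
      have e2 : (⟨D-1, by omega⟩ : Fin D).val + 1 = D := by
        simp only [Fin.val_mk]; omega
      rw [e2]
      by_cases hkj : k = D - 1 - j.val
      · subst hkj
        have hcv : j.val + (D - 1 - j.val) = ((⟨D-1, by omega⟩ : Fin D)).val := by
          simp only [Fin.val_mk]; omega
        rw [if_pos hcv, if_pos rfl, mul_one]
        have eD : D - (D - 1 - j.val) = j.val + 1 := by omega
        rw [eD]
        have hcs : (D.choose (D - 1 - j.val) : ℝ) = (D.choose (j.val + 1) : ℝ) := by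
          have := Nat.choose_symm (n := D) (k := j.val + 1) (by omega)
          rw [show D - 1 - j.val = D - (j.val + 1) by omega, this]
        rw [hcs]
        have hch : (D.choose (j.val + 1) : ℝ) ≠ 0 := by
          exact_mod_cast (Nat.choose_pos (by omega : j.val + 1 ≤ D)).ne'
        unfold betaPIR
        field_simp
      · have hnc : ¬ (j.val + k = ((⟨D-1, by omega⟩ : Fin D)).val) := by
          intro hc
          have hc' : j.val + k = D - 1 := hc
          omega
        rw [if_neg hnc, if_neg hkj, mul_zero, mul_zero]
    rw [Finset.sum_congr rfl key, Finset.sum_ite_eq' _ _ _,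
      if_pos (Finset.mem_range.2 (by omega : D - 1 - j.val < D))]
  rw [hsum, Nat.cast_one, one_mul, add_mul, one_mul, mul_one_div]

/-- The central identity: (1+M)^D = (DL+1) • M^D. -/
lemma Mpir_main (D L : ℕ) (hD : 1 ≤ D) (hL : 1 ≤ L) :
    (1 + Mpir D L) ^ D = ((D * L : ℝ) + 1) • Mpir D L ^ D := by
  set M := Mpir D L with hM
  set P : Matrix (Fin D) (Fin D) ℝ :=
    ∑ k ∈ Finset.range (D + 1), (D.choose k : ℝ) • M ^ k with hP
  have hbin : (1 + M) ^ D = P := by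
    rw [add_comm, (Commute.one_right M).add_pow D, hP]
    refine Finset.sum_congr rfl fun k _ => ?_
    rw [one_pow, mul_one]
    have h1 : ((D.choose k : ℕ) : Matrix (Fin D) (Fin D) ℝ)
        = ((D.choose k : ℕ) : ℝ) • (1 : Matrix (Fin D) (Fin D) ℝ) := by
      rw [← Matrix.diagonal_natCast, Matrix.smul_one_eq_diagonal]
    rw [h1, mul_smul_comm, mul_one]
  have hlast : ∀ j : Fin D, P ⟨D-1, by omega⟩ j
      = ((D * L : ℝ) + 1) * (M ^ D) ⟨D-1, by omega⟩ j := by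
    intro j
    rw [hP, Matrix.sum_apply]
    have : ∀ k ∈ Finset.range (D+1),
        ((D.choose k : ℝ) • M ^ k) ⟨D-1, by omega⟩ j
          = (D.choose k : ℝ) * (M ^ k) ⟨D-1, by omega⟩ j := fun k _ => rfl
    rw [Finset.sum_congr rfl this]
    exact Mpir_lastrow_sum D L hD hL j
  have hPD : P = ((D * L : ℝ) + 1) • M ^ D := by
    ext t j
    set s := D - 1 - t.val with hs
    have hc1 : P * M ^ s = M ^ s * P := by
      rw [hP, Finset.sum_mul, Finset.mul_sum]
      refine Finset.sum_congr rfl fun k _ => ?_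
      rw [smul_mul_assoc, mul_smul_comm, ← pow_add, ← pow_add, add_comm k s]
    have hc2 : (((D * L : ℝ) + 1) • M ^ D) * M ^ s = M ^ s * (((D * L : ℝ) + 1) • M ^ D) := by
      rw [smul_mul_assoc, mul_smul_comm, ← pow_add, ← pow_add, add_comm D s]
    have h1 := Mpir_rowpick D L hD hL P t j
    have h2 := Mpir_rowpick D L hD hL (((D * L : ℝ) + 1) • M ^ D) t j
    have h3 : (M ^ s * P) ⟨D-1, by omega⟩ j
        = (M ^ s * (((D * L : ℝ) + 1) • M ^ D)) ⟨D-1, by omega⟩ j := by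
      rw [← hc1, ← hc2, Matrix.mul_apply, Matrix.mul_apply]
      refine Finset.sum_congr rfl fun l _ => ?_
      rw [hlast l]
      rfl
    rw [h1, h2] at h3
    have hne : betaPIR D L (t.val + 1) / betaPIR D L D ≠ 0 :=
      div_ne_zero (betaPIR_ne D L (t.val+1) hD hL (by omega))
        (betaPIR_ne D L D hD hL le_rfl)
    exact mul_left_cancel₀ hne h3
  rw [hbin, hPD]


theorem g_eq_power_mul_f (D L K : ℕ) (hD : 1 ≤ D) (hL : 1 ≤ L) (hDK : D ∣ K) (hK : D ≤ K)
    (f g : Fin D → ℝ)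
    (hf : ∀ j, f j = ∑ i, ((Mpir D L) ^ (K - D)) i j)
    (hg : ∀ j, g j = ∑ i, ((1 + Mpir D L) ^ (K - D)) i j) :
    (∀ j, g j = ((D * L + 1 : ℝ)) ^ (K / D - 1) * f j) ∧
      (∀ j, g j ≠ 0 → f j / g j = ((D * L + 1 : ℝ)) ^ ((1 : ℤ) - (K / D : ℤ))) := by
  obtain ⟨q, hq⟩ := hDK
  have hq1 : 1 ≤ q := by
    rcases Nat.eq_zero_or_pos q with h | h
    · subst h; omega
    · exact h
  obtain ⟨r, rfl⟩ : ∃ r, q = r + 1 := ⟨q - 1, by omega⟩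
  have hKD : K - D = D * r := by
    rw [hq, Nat.mul_succ, Nat.add_sub_cancel]
  have hKdiv : K / D = r + 1 := by
    rw [hq, Nat.mul_div_cancel_left _ (by omega : 0 < D)]
  have hpow : (1 + Mpir D L) ^ (K - D)
      = ((D * L : ℝ) + 1) ^ r • Mpir D L ^ (K - D) := by
    rw [hKD, pow_mul, pow_mul, Mpir_main D L hD hL, smul_pow]
  have part1 : ∀ j, g j = ((D * L : ℝ) + 1) ^ (K / D - 1) * f j := by
    intro j
    rw [hg j, hpow, hf j, hKdiv, Nat.add_sub_cancel, Finset.mul_sum]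
    refine Finset.sum_congr rfl fun i _ => ?_
    rfl
  have hNpos : (0 : ℝ) < (D * L : ℝ) + 1 := by positivity
  refine ⟨part1, fun j hgj => ?_⟩
  have hfj : f j ≠ 0 := by
    intro h0
    apply hgj
    rw [part1 j, h0, mul_zero]
  have hexp : (1 : ℤ) - (K : ℤ) / (D : ℤ) = -(r : ℤ) := by
    have h1 : (K : ℤ) / (D : ℤ) = (r : ℤ) + 1 := by
      rw [show (K : ℤ) = (D : ℤ) * ((r : ℤ) + 1) by exact_mod_cast hq,
        Int.mul_ediv_cancel_left _ (by exact_mod_cast (by omega : D ≠ 0))]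
    rw [h1]; ring
  rw [hexp, _root_.zpow_neg, zpow_natCast, part1 j, hKdiv, Nat.add_sub_cancel,
    mul_comm, div_mul_cancel_left₀ hfj]
end

section
/- Let D, L ≥ 1, N = DL+1, K a multiple of D with K ≥ D. With f^T = 1^T M^{K−D} and g^T = 1^T (I+M)^{K−D} for the matrix M defined from β_j = DL/C(D,j), the rate R = D·L/(N − max_j f_j/g_j) equals (1 − 1/N)/(1 − 1/N^{K/D}). -/
open Matrix Finset

namespace PIRaux

lemma beta_nonneg (D L j : ℕ) : 0 ≤ betaPIR D L j := by
  unfold betaPIR; positivity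

lemma beta_pos {D L : ℕ} (hD : 1 ≤ D) (hL : 1 ≤ L) {j : ℕ} (hj : j ≤ D) :
    0 < betaPIR D L j := by
  unfold betaPIR
  apply div_pos
  · exact_mod_cast Nat.mul_pos hD hL
  · exact_mod_cast Nat.choose_pos hj

lemma beta_top {D L : ℕ} : betaPIR D L D = (D * L : ℝ) := by
  simp [betaPIR]

lemma Mpir_nonneg (D L : ℕ) (i j : Fin D) : 0 ≤ Mpir D L i j := by
  unfold Mpir
  simp only [Matrix.of_apply]
  split_ifs
  · exact div_nonneg zero_le_one (beta_nonneg D L 1)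
  · exact div_nonneg (beta_nonneg D L _) (beta_nonneg D L _)
  · exact le_refl 0

lemma Mpir_row0 {D L : ℕ} {i : Fin D} (hi : i.val = 0) (j : Fin D) :
    Mpir D L i j = 1 / betaPIR D L 1 := by
  unfold Mpir; simp [hi]

lemma Mpir_sub {D L : ℕ} {i j : Fin D} (h : i.val = j.val + 1) :
    Mpir D L i j = betaPIR D L (j.val + 1) / betaPIR D L (j.val + 2) := by
  unfold Mpir
  simp only [Matrix.of_apply]
  rw [if_neg (by omega), if_pos h]

lemma Mpir_zero {D L : ℕ} {i j : Fin D} (h0 : i.val ≠ 0) (h1 : i.val ≠ j.val + 1) :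
    Mpir D L i j = 0 := by
  unfold Mpir
  simp only [Matrix.of_apply]
  rw [if_neg h0, if_neg h1]

lemma div_cross {a b : ℝ} (ha : a ≠ 0) (hb : b ≠ 0) : a / b * (b / a) = 1 := by
  rw [div_mul_div_comm, mul_comm]
  exact div_self (mul_ne_zero hb ha)

/-- row-`t` of `M * A` for `t ≥ 1`. -/
lemma row_mul {D L : ℕ} (A : Matrix (Fin D) (Fin D) ℝ) (t : Fin D) (ht : 1 ≤ t.val)
    (i : Fin D) :
    (Mpir D L * A) t i
      = betaPIR D L t.val / betaPIR D L (t.val + 1) * A ⟨t.val - 1, by omega⟩ i := by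
  rw [Matrix.mul_apply]
  rw [Finset.sum_eq_single (⟨t.val - 1, by omega⟩ : Fin D)]
  · congr 1
    rw [Mpir_sub (show t.val = t.val - 1 + 1 by omega)]
    congr 2 <;> simp only [Fin.val_mk] <;> omega
  · intro s _ hs
    rw [Mpir_zero (by omega) (fun hc => hs (Fin.ext (show s.val = t.val - 1 by omega)))]
    ring
  · intro h; exact absurd (Finset.mem_univ _) h

/-- row-`0` of `M * A`. -/
lemma row0_mul {D L : ℕ} (A : Matrix (Fin D) (Fin D) ℝ) (t : Fin D) (ht : t.val = 0)
    (i : Fin D) :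
    (Mpir D L * A) t i = 1 / betaPIR D L 1 * ∑ s, A s i := by
  rw [Matrix.mul_apply, Finset.mul_sum]
  exact Finset.sum_congr rfl fun s _ => by rw [Mpir_row0 ht]

lemma rowA {D L : ℕ} (hD : 1 ≤ D) (hL : 1 ≤ L) :
    ∀ k, k < D → ∀ (A : Matrix (Fin D) (Fin D) ℝ) (i : Fin D),
    ((Mpir D L) ^ k * A) ⟨D - 1, by omega⟩ i
      = betaPIR D L (D - k) / betaPIR D L D * A ⟨D - 1 - k, by omega⟩ i := by
  intro k
  induction k with
  | zero =>
    intro _ A i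
    simp only [Nat.sub_zero, pow_zero, one_mul]
    rw [div_self (beta_pos hD hL (le_refl D)).ne', one_mul]
  | succ k ih =>
    intro hk A i
    have hk' : k < D := by omega
    rw [pow_succ, mul_assoc, ih hk']
    rw [row_mul (L := L) A ⟨D - 1 - k, by omega⟩ (by simp only [Fin.val_mk]; omega) i]
    have e1 : (D - 1 - k : ℕ) + 1 = D - k := by omega
    rw [e1]
    have hbz : betaPIR D L (D - k) ≠ 0 := (beta_pos hD hL (by omega)).ne'
    rw [← mul_assoc]
    congr 1
    have e3 : D - (k + 1) = D - 1 - k := by omega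
    rw [e3, div_mul_div_comm, mul_comm (betaPIR D L D) (betaPIR D L (D - k))]
    exact mul_div_mul_left _ _ hbz

lemma rowQ {D L : ℕ} (hD : 1 ≤ D) (hL : 1 ≤ L) (A : Matrix (Fin D) (Fin D) ℝ) (i : Fin D) :
    ∑ k ∈ Finset.range D, (D.choose k : ℝ) * (((Mpir D L) ^ k * A) ⟨D - 1, by omega⟩ i)
      = (D * L : ℝ) * (((Mpir D L) ^ D * A) ⟨D - 1, by omega⟩ i) := by
  have hDL : (0:ℝ) < (D:ℝ) * L := by
    have := Nat.mul_pos hD hL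
    exact_mod_cast this
  have hL1 : ∀ k ∈ Finset.range D,
      (D.choose k : ℝ) * (((Mpir D L) ^ k * A) ⟨D - 1, by omega⟩ i)
        = (fun t => if h : t < D then A ⟨t, h⟩ i else 0) (D - 1 - k) := by
    intro k hk
    have hk' : k < D := Finset.mem_range.mp hk
    rw [rowA hD hL k hk' A i]
    have hb : betaPIR D L (D - k) = (D * L : ℝ) / (D.choose k : ℝ) := by
      unfold betaPIR
      rw [Nat.choose_symm (le_of_lt hk')]
    have hc : (0:ℝ) < (D.choose k : ℝ) := by exact_mod_cast Nat.choose_pos (le_of_lt hk')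
    have hcrat : (D.choose k : ℝ) * (betaPIR D L (D - k) / betaPIR D L D) = 1 := by
      rw [hb, beta_top, div_div, mul_comm ((D.choose k : ℝ)) ((D:ℝ) * L), ← div_div,
        div_self hDL.ne', mul_one_div_cancel hc.ne']
    rw [← mul_assoc, hcrat, one_mul]
    show A ⟨D - 1 - k, by omega⟩ i
      = if h : D - 1 - k < D then A ⟨D - 1 - k, h⟩ i else 0
    rw [dif_pos (show D - 1 - k < D by omega)]
  calc ∑ k ∈ Finset.range D, (D.choose k : ℝ) * (((Mpir D L) ^ k * A) ⟨D - 1, by omega⟩ i)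
      = ∑ k ∈ Finset.range D, (fun t => if h : t < D then A ⟨t, h⟩ i else 0) (D - 1 - k) :=
        Finset.sum_congr rfl hL1
    _ = ∑ k ∈ Finset.range D, (fun t => if h : t < D then A ⟨t, h⟩ i else 0) k := by
        exact Finset.sum_range_reflect (fun t => if h : t < D then A ⟨t, h⟩ i else 0) D
    _ = ∑ s, A s i := by
        rw [← Fin.sum_univ_eq_sum_range]
        exact Finset.sum_congr rfl fun s _ => dif_pos s.isLt
    _ = (D * L : ℝ) * (((Mpir D L) ^ D * A) ⟨D - 1, by omega⟩ i) := by
        have hpow : (Mpir D L) ^ D * A = (Mpir D L) ^ (D - 1) * (Mpir D L * A) := by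
          rw [← mul_assoc, ← pow_succ, Nat.sub_add_cancel hD]
        rw [hpow, rowA hD hL (D - 1) (by omega) (Mpir D L * A) i]
        rw [row0_mul (L := L) A ⟨D - 1 - (D - 1), by omega⟩ (by simp) i]
        have e1 : D - (D - 1) = 1 := by omega
        rw [e1, beta_top]
        have hb1 : betaPIR D L 1 ≠ 0 := (beta_pos hD hL hD).ne'
        field_simp

/-- The central matrix identity: `∑_{k<D} C(D,k) M^k = DL · M^D`. -/
lemma Qzero {D L : ℕ} (hD : 1 ≤ D) (hL : 1 ≤ L) :
    ∑ k ∈ Finset.range D, (D.choose k : ℝ) • (Mpir D L) ^ k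
      = ((D : ℝ) * L) • (Mpir D L) ^ D := by
  ext j i
  simp only [Finset.sum_apply, Matrix.sum_apply, Matrix.smul_apply, smul_eq_mul]
  set r : ℕ := D - 1 - j.val with hr
  have hrD : r < D := by omega
  have hbD : betaPIR D L D ≠ 0 := (beta_pos hD hL (le_refl D)).ne'
  have hbj : betaPIR D L (D - r) ≠ 0 := (beta_pos hD hL (by omega)).ne'
  set c : ℝ := betaPIR D L (D - r) / betaPIR D L D with hc
  have hcne : c ≠ 0 := div_ne_zero hbj hbD
  have key : ∀ s : ℕ, ((Mpir D L ^ s * Mpir D L ^ r) ⟨D - 1, by omega⟩ i) = c * (Mpir D L ^ s) j i := by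
    intro s
    rw [pow_mul_comm (Mpir D L) s r, rowA hD hL r hrD (Mpir D L ^ s) i]
    have hjj : (⟨D - 1 - r, by omega⟩ : Fin D) = j := by
      have hjlt := j.isLt
      exact Fin.ext (show D - 1 - r = j.val by omega)
    rw [hjj]
  have h1 := rowQ hD hL (Mpir D L ^ r) i
  simp only [key] at h1
  have h2 : c * (∑ k ∈ Finset.range D, (D.choose k : ℝ) * (Mpir D L ^ k) j i)
      = c * (((D : ℝ) * L) * (Mpir D L ^ D) j i) := by
    rw [Finset.mul_sum]
    calc ∑ k ∈ Finset.range D, c * ((D.choose k : ℝ) * (Mpir D L ^ k) j i)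
        = ∑ k ∈ Finset.range D, (D.choose k : ℝ) * (c * (Mpir D L ^ k) j i) :=
          Finset.sum_congr rfl fun k _ => by ring
      _ = ((D : ℝ) * L) * (c * (Mpir D L ^ D) j i) := h1
      _ = c * (((D : ℝ) * L) * (Mpir D L ^ D) j i) := by ring
  exact mul_left_cancel₀ hcne h2

lemma one_add_pow {D L : ℕ} (hD : 1 ≤ D) (hL : 1 ≤ L) :
    (1 + Mpir D L) ^ D = ((D : ℝ) * L + 1) • (Mpir D L) ^ D := by
  have h := (Commute.one_right (Mpir D L)).add_pow D
  rw [add_comm] at h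
  rw [h, Finset.sum_range_succ]
  have hconv : ∀ m : ℕ,
      (Mpir D L) ^ m * (1:Matrix (Fin D) (Fin D) ℝ) ^ (D - m) * (D.choose m : Matrix (Fin D) (Fin D) ℝ)
        = (D.choose m : ℝ) • (Mpir D L) ^ m := by
    intro m
    rw [one_pow, mul_one, ← (Nat.cast_commute (D.choose m) ((Mpir D L) ^ m)).eq,
      ← nsmul_eq_mul, ← Nat.cast_smul_eq_nsmul ℝ]
  rw [Finset.sum_congr rfl fun m _ => hconv m, Qzero hD hL, hconv D]
  simp only [Nat.choose_self, Nat.cast_one, one_smul]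
  rw [add_smul, one_smul]

lemma fpos {D L : ℕ} (hD : 1 ≤ D) (hL : 1 ≤ L) :
    ∀ (m : ℕ) (j : Fin D), 0 < ∑ i, ((Mpir D L) ^ m) i j := by
  intro m
  induction m with
  | zero =>
    intro j
    simp [Matrix.one_apply]
  | succ m ih =>
    intro j
    have h : ∑ i, ((Mpir D L) ^ (m + 1)) i j
        = ∑ k, (∑ i, ((Mpir D L) ^ m) i k) * Mpir D L k j := by
      rw [pow_succ]
      simp only [Matrix.mul_apply, Finset.sum_mul]
      rw [Finset.sum_comm]
    rw [h]
    apply Finset.sum_pos'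
    · intro k _
      exact mul_nonneg (le_of_lt (ih k)) (Mpir_nonneg D L k j)
    · refine ⟨⟨0, by omega⟩, Finset.mem_univ _, ?_⟩
      apply mul_pos (ih _)
      rw [Mpir_row0 rfl]
      exact div_pos one_pos (beta_pos hD hL hD)

end PIRaux

theorem rate_achieves_capacity (D L K : ℕ) (hD : 1 ≤ D) (hL : 1 ≤ L) (hDK : D ∣ K) (hK : D ≤ K)
    (f g : Fin D → ℝ)
    (hf : ∀ j, f j = ∑ i, ((Mpir D L) ^ (K - D)) i j)
    (hg : ∀ j, g j = ∑ i, ((1 + Mpir D L) ^ (K - D)) i j)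
    (jstar : Fin D) (hmax : ∀ j, f j / g j ≤ f jstar / g jstar) :
    (D * L : ℝ) / ((D * L + 1 : ℝ) - f jstar / g jstar) =
      (1 - 1 / (D * L + 1 : ℝ)) / (1 - 1 / (D * L + 1 : ℝ) ^ (K / D)) := by
  obtain ⟨q, hqK⟩ := hDK
  have hq0 : q ≠ 0 := by rintro rfl; omega
  obtain ⟨q', rfl⟩ : ∃ q', q = q' + 1 := ⟨q - 1, by omega⟩
  have hKexp : K = D * q' + D := by rw [hqK]; ring
  have hKD : K - D = D * q' := by omega
  have hKq : K / D = q' + 1 := by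
    rw [hqK]
    exact Nat.mul_div_cancel_left _ (by omega)
  set N : ℝ := (D : ℝ) * L + 1 with hN
  have hDL : (1:ℝ) ≤ (D:ℝ) * L := by
    have : (1:ℕ) ≤ D * L := Nat.mul_pos hD hL
    exact_mod_cast this
  have hN1 : (1:ℝ) < N := by rw [hN]; linarith
  have hNpos : (0:ℝ) < N := by linarith
  have hpowid : (1 + Mpir D L) ^ (K - D) = (N ^ q') • (Mpir D L) ^ (K - D) := by
    rw [hKD, pow_mul, pow_mul, PIRaux.one_add_pow hD hL, smul_pow]
  have hfg : g jstar = N ^ q' * f jstar := by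
    rw [hg, hf, hpowid]
    simp only [Matrix.smul_apply, smul_eq_mul, ← Finset.mul_sum]
  have hfp : 0 < f jstar := by rw [hf]; exact PIRaux.fpos hD hL _ _
  have hratio : f jstar / g jstar = 1 / N ^ q' := by
    rw [hfg, mul_comm, ← div_div, div_self hfp.ne']
  rw [hratio, hKq]
  have hNq' : (0:ℝ) < N ^ q' := pow_pos hNpos _
  have hNq'1 : (1:ℝ) ≤ N ^ q' := one_le_pow₀ hN1.le
  have hNq1 : (1:ℝ) < N ^ (q' + 1) := one_lt_pow₀ hN1 (by omega)
  have hd1 : (0:ℝ) < N - 1 / N ^ q' := by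
    have : 1 / N ^ q' ≤ 1 := by
      rw [div_le_one hNq']
      exact hNq'1
    linarith
  have hd2 : (0:ℝ) < 1 - 1 / N ^ (q' + 1) := by
    have : 1 / N ^ (q' + 1) < 1 := by
      rw [div_lt_one (by positivity)]
      exact hNq1
    linarith
  rw [div_eq_div_iff hd1.ne' hd2.ne']
  have hDLN : (D:ℝ) * L = N - 1 := by rw [hN]; ring
  have hsucc : N ^ (q' + 1) = N ^ q' * N := pow_succ N q'
  rw [hDLN, hsucc]
  field_simp
end
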